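/- If M is a model of true arithmetic (or merely a discretely ordered semiring with the floor property and full induction for definable sets) then the quotient field construction K_M via definable Cauchy sequences has M as an integer part: every class of a definable convergent sequence r admits s in M with s ≤ r < s + 1. -/

import Mathlib

theorem stmt_18 {K : Type*} [Field K] [LinearOrder K] [IsStrictOrderedRing K] (Z : Subring K)
    (hdisc : ¬∃ z ∈ Z, 0 < z ∧ z < 1)
    (hwo : ∀ S : Set K, S ⊆ (Z : Set K) → S.Nonempty →
      (∃ l ∈ Z, ∀ z ∈ S, l ≤ z) → ∃ s ∈ S, ∀ z ∈ S, s ≤ z)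
    (hfloor : ∀ a ∈ Z, ∀ b ∈ Z, 0 < b → ∃ k ∈ Z, k * b ≤ a ∧ a < (k + 1) * b)
    (r : K) (c : ℕ → K)
    (hfrac : ∀ k : ℕ, ∃ a ∈ Z, ∃ b ∈ Z, 0 < b ∧ c k = a / b)
    (hconv : ∀ m ∈ Z, 0 < m → ∃ N : ℕ, ∀ k : ℕ, N ≤ k → |r - c k| < 1 / m) :
    ∃ s ∈ Z, s ≤ r ∧ r < s + 1 := by
  -- discreteness: positive elements of Z are ≥ 1
  have hge1 : ∀ z ∈ Z, 0 < z → 1 ≤ z := by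
    intro z hz h0
    by_contra h
    exact hdisc ⟨z, hz, h0, lt_of_not_ge h⟩
  -- get a rational approximation within 1
  obtain ⟨N, hN⟩ := hconv 1 Z.one_mem one_pos
  have hc1 : |r - c N| < 1 := by simpa using hN N le_rfl
  obtain ⟨a, ha, b, hb, hbpos, hab⟩ := hfrac N
  obtain ⟨k, hk, hk1, hk2⟩ := hfloor a ha b hb hbpos
  have hkc : k ≤ c N := by
    rw [hab, le_div_iff₀ hbpos]; exact hk1
  have hck : c N < k + 1 := by
    rw [hab, div_lt_iff₀ hbpos]; exact hk2
  have hr1 : k - 1 < r := by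
    have := abs_lt.mp hc1
    linarith [this.2]
  have hr2 : r < k + 2 := by
    have := abs_lt.mp hc1
    linarith [this.1]
  set S : Set K := {z : K | z ∈ Z ∧ r < z + 1} with hS
  have hsub : S ⊆ (Z : Set K) := fun z hz => hz.1
  have hne : S.Nonempty := ⟨k + 1, ⟨Z.add_mem hk Z.one_mem, by linarith⟩⟩
  have hbdd : ∃ l ∈ Z, ∀ z ∈ S, l ≤ z := by
    refine ⟨k - 1, Z.sub_mem hk Z.one_mem, ?_⟩
    rintro z ⟨hzZ, hzr⟩
    by_contra h
    push_neg at h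
    have hpos : 0 < (k - 1) - z := by linarith
    have := hge1 _ (Z.sub_mem (Z.sub_mem hk Z.one_mem) hzZ) hpos
    linarith
  obtain ⟨s, ⟨hsZ, hsr⟩, hmin⟩ := hwo S hsub hne hbdd
  refine ⟨s, hsZ, ?_, hsr⟩
  by_contra h
  push_neg at h
  have : s - 1 ∈ S := ⟨Z.sub_mem hsZ Z.one_mem, by linarith⟩
  have := hmin _ this
  linarith
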